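/- Let e, x_1, ..., x_p be elements of a ring R and n_1, ..., n_p be non-negative integers. Then e · x_1^{n_1} ⋯ x_p^{n_p} = ∑_{i_1=0}^{n_1} ⋯ ∑_{i_p=0}^{n_p} binomial(n_1, i_1) ⋯ binomial(n_p, i_p) · x_1^{i_1} ⋯ x_p^{i_p} · [e, x̄]_{n_1 - i_1, ..., n_p - i_p}. -/

import Mathlib

/-- Iterated commutator: `itc a b 0 = a`, `itc a b (k+1) = [itc a b k, b]`. -/
def itc {R : Type*} [Ring R] (a b : R) : ℕ → R
  | 0 => a
  | k + 1 => itc a b k * b - b * itc a b k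

/-- Multi-iterated commutator `[a, b̄]_{k_1,…,k_p}` along a list of pairs `(b, k)`. -/
def mitc {R : Type*} [Ring R] (a : R) : List (R × ℕ) → R
  | [] => a
  | (b, k) :: t => mitc (itc a b k) t

/-- Single-variable case: `e·b^n = ∑ C(n,i) b^i [e,b]_{n-i}`. -/
lemma one_var {R : Type*} [Ring R] (e b : R) (n : ℕ) :
    e * b ^ n = ∑ i ∈ Finset.range (n + 1), (n.choose i) • (b ^ i * itc e b (n - i)) := by
  set L : AddMonoid.End R := AddMonoidHom.mulLeft b with hL
  set Rr : AddMonoid.End R := AddMonoidHom.mulRight b with hRr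
  have hLR : Commute L Rr := AddMonoidHom.ext fun a => (mul_assoc b a b).symm
  have hcomm : Commute L (Rr - L) := hLR.sub_right (Commute.refl L)
  have hRpow : ∀ (m : ℕ) (z : R), (Rr ^ m) z = z * b ^ m := by
    intro m
    induction m with
    | zero => intro z; simp
    | succ k ih =>
      intro z
      rw [pow_succ']
      show Rr ((Rr ^ k) z) = _
      rw [ih, pow_succ, ← mul_assoc]
      rfl
  have hLpow : ∀ (m : ℕ) (z : R), (L ^ m) z = b ^ m * z := by
    intro m
    induction m with
    | zero => intro z; simp
    | succ k ih =>
      intro z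
      rw [pow_succ']
      show L ((L ^ k) z) = _
      rw [ih, pow_succ', mul_assoc]
      rfl
  have hDpow : ∀ (m : ℕ), ((Rr - L) ^ m) e = itc e b m := by
    intro m
    induction m with
    | zero => simp [itc]
    | succ k ih =>
      rw [pow_succ']
      show (Rr - L) (((Rr - L) ^ k) e) = _
      rw [show ∀ (f g : AddMonoid.End R) (z : R), (f - g) z = f z - g z from fun _ _ _ => rfl, ih]
      rfl
  have key : e * b ^ n = ((L + (Rr - L)) ^ n) e := by
    rw [add_sub_cancel, hRpow]
  rw [key, hcomm.add_pow, show ∀ (s : Finset ℕ) (f : ℕ → AddMonoid.End R) (z : R),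
      (∑ m ∈ s, f m) z = ∑ m ∈ s, f m z from fun s f z => AddMonoidHom.finsetSum_apply f s z]
  refine Finset.sum_congr rfl fun i hi => ?_
  show (L ^ i) (((Rr - L) ^ (n - i)) ((n.choose i : AddMonoid.End R) e)) = _
  rw [AddMonoid.End.natCast_apply, map_nsmul, hDpow, hLpow, mul_smul_comm]

/-- `e·x_1^{n_1}⋯x_p^{n_p} = ∑_{i_1,…,i_p} C(n_1,i_1)⋯C(n_p,i_p) ·
x_1^{i_1}⋯x_p^{i_p} · [e,x̄]_{n_1-i_1,…,n_p-i_p}`. -/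
theorem stmt_4 {R : Type*} [Ring R] (p : ℕ) (e : R) (x : Fin p → R) (n : Fin p → ℕ) :
    e * (List.ofFn fun j => x j ^ n j).prod =
      ∑ i : (j : Fin p) → Fin (n j + 1),
        (∏ j, (n j).choose (i j)) •
          ((List.ofFn fun j => x j ^ (i j : ℕ)).prod *
            mitc e (List.ofFn fun j => (x j, n j - (i j : ℕ)))) := by
  induction p generalizing e with
  | zero => simp [mitc]
  | succ p ih =>
    rw [← Equiv.sum_comp (Fin.consEquiv fun j => Fin (n j + 1)), Fintype.sum_prod_type]
    rw [List.ofFn_succ, List.prod_cons, ← mul_assoc, one_var, ← Fin.sum_univ_eq_sum_range,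
      Finset.sum_mul]
    refine Finset.sum_congr rfl fun i0 _ => ?_
    rw [smul_mul_assoc, mul_assoc,
      ih (itc e (x 0) (n 0 - (i0 : ℕ))) (fun j => x j.succ) (fun j => n j.succ),
      Finset.mul_sum, Finset.smul_sum]
    refine Finset.sum_congr rfl fun i' _ => ?_
    simp only [Fin.consEquiv_apply, Fin.prod_univ_succ, Fin.cons_zero, Fin.cons_succ,
      List.ofFn_succ, List.prod_cons, mitc, mul_smul_comm, mul_smul, mul_assoc]
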